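/- Let Y be an ℝᵈ-valued random variable and F : ℝᵈ → ℝᵈ a globally Lipschitz function with Lipschitz constant L (with respect to the sup-norm). If F(Y) has a density ρ that is locally bounded, then Y has a density and there is a version ρ^Y of the density of Y satisfying ρ^Y(y) ≤ Lᵈ·ρ(F(y)) for all y ∈ ℝᵈ. -/

import Mathlib

open MeasureTheory Set

theorem density_transfer_lipschitz {Ω : Type*} [MeasureSpace Ω] (P : Measure Ω)
    [IsProbabilityMeasure P] (d : ℕ) (hd : 0 < d)
    (Y : Ω → (Fin d → ℝ)) (hY : Measurable Y)
    (F : (Fin d → ℝ) → (Fin d → ℝ)) (L : NNReal) (hF : LipschitzWith L F)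
    (ρ : (Fin d → ℝ) → ENNReal) (hmeas : Measurable ρ)
    (hdens : Measure.map (fun ω => F (Y ω)) P = volume.withDensity ρ)
    (hloc : ∀ K : Set (Fin d → ℝ), IsCompact K →
      ∃ M : ENNReal, M < ⊤ ∧ ∀ y ∈ K, ρ y ≤ M) :
    ∃ ρY : (Fin d → ℝ) → ENNReal,
      Measure.map Y P = volume.withDensity ρY ∧
      ∀ y, ρY y ≤ (L : ENNReal) ^ d * ρ (F y) := by
  classical
  set μ := Measure.map Y P with hμdef
  have hFc : Continuous F := hF.continuous
  have hFm : Measurable F := hFc.measurable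
  set h : (Fin d → ℝ) → ENNReal := fun y => (L : ENNReal) ^ d * ρ (F y) with hh
  have hhm : Measurable h := (hmeas.comp hFm).const_mul _
  -- Lipschitz image measure bound
  have himg : ∀ S : Set (Fin d → ℝ),
      volume (F '' S) ≤ (L : ENNReal) ^ d * volume S := by
    intro S
    have key := hF.hausdorffMeasure_image_le (d := (d : ℝ)) (Nat.cast_nonneg d) S
    have hvol : (μH[(d : ℝ)] : Measure (Fin d → ℝ)) = volume := by
      simpa using hausdorffMeasure_pi_real (ι := Fin d)
    rw [hvol, ENNReal.rpow_natCast] at key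
    exact key
  -- integral inequality over images
  have hint : ∀ (K : Set (Fin d → ℝ)), ∀ g : (Fin d → ℝ) → ENNReal, Measurable g →
      ∫⁻ x in F '' K, g x ≤ (L : ENNReal) ^ d * ∫⁻ y in K, g (F y) := by
    intro K
    apply Measurable.ennreal_induction
    · intro c s hs
      rw [lintegral_indicator_const hs]
      have heq : (fun y => Set.indicator s (fun _ => c) (F y))
          = Set.indicator (F ⁻¹' s) (fun _ => c) := by
        ext y
        by_cases hy : F y ∈ s <;> simp [Set.indicator_apply, hy]
      rw [heq, lintegral_indicator_const (hFm hs)]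
      rw [Measure.restrict_apply hs, Measure.restrict_apply (hFm hs)]
      have hsub : s ∩ F '' K ⊆ F '' (F ⁻¹' s ∩ K) := by
        rintro x ⟨hxs, y, hyK, rfl⟩
        exact ⟨y, ⟨hxs, hyK⟩, rfl⟩
      calc c * volume (s ∩ F '' K) ≤ c * volume (F '' (F ⁻¹' s ∩ K)) :=
            mul_le_mul_right (measure_mono hsub) c
        _ ≤ c * ((L : ENNReal) ^ d * volume (F ⁻¹' s ∩ K)) :=
            mul_le_mul_right (himg _) c
        _ = (L : ENNReal) ^ d * (c * volume (F ⁻¹' s ∩ K)) := by ring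
    · intro f g _ hfm hgm hPf hPg
      simp only [Pi.add_apply]
      rw [lintegral_add_left hfm, lintegral_add_left (hfm.comp' hFm)]
      calc (∫⁻ x in F '' K, f x) + ∫⁻ x in F '' K, g x
          ≤ (L : ENNReal) ^ d * (∫⁻ y in K, f (F y)) +
            (L : ENNReal) ^ d * ∫⁻ y in K, g (F y) := add_le_add hPf hPg
        _ = (L : ENNReal) ^ d *
            ((∫⁻ y in K, f (F y)) + ∫⁻ y in K, g (F y)) := by ring
    · intro f hfm hfmono hPf
      simp only [iSup_apply]
      rw [lintegral_iSup hfm hfmono,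
        lintegral_iSup (fun n => ((hfm n).comp' hFm))
          (fun m n hmn y => hfmono hmn (F y))]
      rw [ENNReal.mul_iSup]
      exact iSup_mono fun n => hPf n
  -- finiteness and regularity of μ
  haveI : IsProbabilityMeasure μ := Measure.isProbabilityMeasure_map hY.aemeasurable
  -- μ ≤ withDensity h on measurable sets
  have hle : ∀ s : Set (Fin d → ℝ), MeasurableSet s →
      μ s ≤ ∫⁻ y in s, h y := by
    intro s hs
    rw [hs.measure_eq_iSup_isCompact]
    refine iSup_le fun K => iSup_le fun hKs => iSup_le fun hK => ?_
    have hKmeas : MeasurableSet K := hK.measurableSet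
    have hFKmeas : MeasurableSet (F '' K) := (hK.image hFc).measurableSet
    have step1 : μ K ≤ Measure.map (fun ω => F (Y ω)) P (F '' K) := by
      rw [hμdef, Measure.map_apply hY hKmeas,
        Measure.map_apply (hFm.comp' hY) hFKmeas]
      exact measure_mono fun ω hω => ⟨Y ω, hω, rfl⟩
    have step2 : Measure.map (fun ω => F (Y ω)) P (F '' K)
        = ∫⁻ x in F '' K, ρ x := by
      rw [hdens, withDensity_apply _ hFKmeas]
    have step3 : ∫⁻ x in F '' K, ρ x ≤ (L : ENNReal) ^ d * ∫⁻ y in K, ρ (F y) :=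
      hint K ρ hmeas
    have step4 : (L : ENNReal) ^ d * ∫⁻ y in K, ρ (F y) = ∫⁻ y in K, h y := by
      simp only [hh]
      exact (lintegral_const_mul _ (hmeas.comp' hFm)).symm
    calc μ K ≤ ∫⁻ x in F '' K, ρ x := step2 ▸ step1
      _ ≤ (L : ENNReal) ^ d * ∫⁻ y in K, ρ (F y) := step3
      _ = ∫⁻ y in K, h y := step4
      _ ≤ ∫⁻ y in s, h y := lintegral_mono_set hKs
  -- absolute continuity
  have hac : μ ≪ volume := by
    intro s hs
    have hsm : MeasurableSet (toMeasurable volume s) := measurableSet_toMeasurable _ _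
    have h0 : μ (toMeasurable volume s) = 0 := by
      refine le_antisymm ?_ zero_le
      refine (hle _ hsm).trans ?_
      rw [setLIntegral_measure_zero _ _ (by rw [measure_toMeasurable]; exact hs)]
    exact measure_mono_null (subset_toMeasurable _ _) h0
  -- rnDeriv bound
  have hrn : μ.rnDeriv volume ≤ᵐ[volume] h := by
    refine ae_le_of_forall_setLIntegral_le_of_sigmaFinite
      (μ.measurable_rnDeriv volume) fun s hs _ => ?_
    exact (Measure.setLIntegral_rnDeriv_le s).trans (hle s hs)
  refine ⟨fun y => min (μ.rnDeriv volume y) (h y), ?_, ?_⟩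
  · have heq : (fun y => min (μ.rnDeriv volume y) (h y)) =ᵐ[volume]
        μ.rnDeriv volume := by
      filter_upwards [hrn] with y hy
      exact min_eq_left hy
    rw [withDensity_congr_ae heq, Measure.withDensity_rnDeriv_eq _ _ hac]
  · intro y
    exact min_le_right _ _
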